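/- Let X be a real Banach space, x, y ∈ X with x ≠ 0, and p a norm-one functional with ⟨p, x⟩ = ‖x‖. Then ‖x + y‖ ≤ ‖x‖ + ⟨p, y⟩ + 2‖x‖ ρ_X(‖y‖/‖x‖), where ρ_X is the modulus of smoothness. -/

import Mathlib

noncomputable def suppLam {X : Type*} [NormedAddCommGroup X] [NormedSpace ℝ X]
    (x y : X) (r : ℝ) : ℝ := sInf {l : ℝ | ‖x + r • y - l • x‖ = 1}

/-- `y` is quasiorthogonal to `x`: some norming functional of `x` vanishes at `y`. -/
def Quasiorth {X : Type*} [NormedAddCommGroup X] [NormedSpace ℝ X] (x y : X) : Prop :=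
  ∃ p : X →L[ℝ] ℝ, ‖p‖ = 1 ∧ p x = ‖x‖ ∧ p y = 0

/-- Modulus of supporting convexity `λ⁻_X`. -/
noncomputable def suppConvexity (X : Type*) [NormedAddCommGroup X] [NormedSpace ℝ X]
    (r : ℝ) : ℝ :=
  sInf {v : ℝ | ∃ (x y : X) (t : ℝ), ‖x‖ = 1 ∧ ‖y‖ = 1 ∧ Quasiorth x y ∧
    0 ≤ t ∧ t ≤ r ∧ v = min (suppLam x y t) (suppLam x (-y) t)}

/-- Modulus of supporting smoothness `λ⁺_X`. -/
noncomputable def suppSmoothness (X : Type*) [NormedAddCommGroup X] [NormedSpace ℝ X]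
    (r : ℝ) : ℝ :=
  sSup {v : ℝ | ∃ (x y : X) (t : ℝ), ‖x‖ = 1 ∧ ‖y‖ = 1 ∧ Quasiorth x y ∧
    0 ≤ t ∧ t ≤ r ∧ v = max (suppLam x y t) (suppLam x (-y) t)}

/-- Modulus of convexity `δ_X`. -/
noncomputable def modConvexity (X : Type*) [NormedAddCommGroup X] [NormedSpace ℝ X]
    (ε : ℝ) : ℝ :=
  sInf {v : ℝ | ∃ x y : X, ‖x‖ ≤ 1 ∧ ‖y‖ ≤ 1 ∧ ε ≤ ‖x - y‖ ∧ v = 1 - ‖x + y‖ / 2}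

/-- Modulus of smoothness `ρ_X`. -/
noncomputable def modSmoothness (X : Type*) [NormedAddCommGroup X] [NormedSpace ℝ X]
    (τ : ℝ) : ℝ :=
  sSup {v : ℝ | ∃ x y : X, ‖x‖ = 1 ∧ ‖y‖ = τ ∧ v = ‖x + y‖ / 2 + ‖x - y‖ / 2 - 1}

/-- Banaś modulus `b_X`. -/
noncomputable def banasMod (X : Type*) [NormedAddCommGroup X] [NormedSpace ℝ X]
    (ε : ℝ) : ℝ :=
  sSup {v : ℝ | ∃ x y : X, ‖x‖ ≤ 1 ∧ ‖y‖ ≤ 1 ∧ ‖x - y‖ ≤ ε ∧ v = 1 - ‖x + y‖ / 2}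

theorem norm_add_le_of_norming {X : Type*} [NormedAddCommGroup X] [NormedSpace ℝ X]
    [CompleteSpace X] (x y : X) (hx : x ≠ 0)
    (p : X →L[ℝ] ℝ) (hp : ‖p‖ = 1) (hpx : p x = ‖x‖) :
    ‖x + y‖ ≤ ‖x‖ + p y + 2 * ‖x‖ * modSmoothness X (‖y‖ / ‖x‖) := by
  have hc : (0:ℝ) < ‖x‖ := norm_pos_iff.mpr hx
  set c := ‖x‖ with hcdef
  set u : X := c⁻¹ • x with hu
  set v : X := c⁻¹ • y with hv
  have hnu : ‖u‖ = 1 := by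
    rw [hu, norm_smul, norm_inv, Real.norm_eq_abs, abs_of_pos hc]
    field_simp
    exact hcdef.symm
  have hnv : ‖v‖ = ‖y‖ / c := by
    rw [hv, norm_smul, norm_inv, Real.norm_eq_abs, abs_of_pos hc]
    ring
  set τ := ‖y‖ / c with hτ
  -- the modulus bound
  have hbdd : BddAbove {w : ℝ | ∃ a b : X, ‖a‖ = 1 ∧ ‖b‖ = τ ∧
      w = ‖a + b‖ / 2 + ‖a - b‖ / 2 - 1} := by
    refine ⟨τ, ?_⟩
    rintro w ⟨a, b, ha, hb, rfl⟩
    have h1 : ‖a + b‖ ≤ 1 + τ := by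
      calc ‖a + b‖ ≤ ‖a‖ + ‖b‖ := norm_add_le a b
        _ = 1 + τ := by rw [ha, hb]
    have h2 : ‖a - b‖ ≤ 1 + τ := by
      calc ‖a - b‖ ≤ ‖a‖ + ‖b‖ := norm_sub_le a b
        _ = 1 + τ := by rw [ha, hb]
    linarith
  have hmem : ‖u + v‖ / 2 + ‖u - v‖ / 2 - 1 ∈ {w : ℝ | ∃ a b : X, ‖a‖ = 1 ∧ ‖b‖ = τ ∧
      w = ‖a + b‖ / 2 + ‖a - b‖ / 2 - 1} := ⟨u, v, hnu, hnv, rfl⟩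
  have hρ : ‖u + v‖ / 2 + ‖u - v‖ / 2 - 1 ≤ modSmoothness X τ :=
    le_csSup hbdd hmem
  -- lower bound on ‖u - v‖ via p
  have hpu : p u = 1 := by
    rw [hu, map_smul]
    simp only [smul_eq_mul, hpx]
    field_simp
  have hpv : p v = c⁻¹ * p y := by rw [hv, map_smul]; simp
  have hpd : p (u - v) ≤ ‖u - v‖ := by
    calc p (u - v) ≤ ‖p (u - v)‖ := Real.le_norm_self _
      _ ≤ ‖p‖ * ‖u - v‖ := p.le_opNorm _
      _ = ‖u - v‖ := by rw [hp, one_mul]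
  have hd : 1 - c⁻¹ * p y ≤ ‖u - v‖ := by
    have : p (u - v) = 1 - c⁻¹ * p y := by rw [map_sub, hpu, hpv]
    linarith [hpd, this ▸ hpd]
  -- ‖x + y‖ = c * ‖u + v‖
  have hxy : ‖x + y‖ = c * ‖u + v‖ := by
    have : x + y = c • (u + v) := by
      rw [hu, hv, smul_add, smul_smul, smul_smul, mul_inv_cancel₀ hc.ne']
      simp
    rw [this, norm_smul, Real.norm_eq_abs, abs_of_pos hc]
  have key : ‖u + v‖ ≤ 1 + c⁻¹ * p y + 2 * modSmoothness X τ := by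
    have := hρ
    nlinarith [hd]
  calc ‖x + y‖ = c * ‖u + v‖ := hxy
    _ ≤ c * (1 + c⁻¹ * p y + 2 * modSmoothness X τ) := by
        exact mul_le_mul_of_nonneg_left key hc.le
    _ = c + p y + 2 * c * modSmoothness X τ := by field_simp
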